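/- Assume λ + μ² ≠ 0. Let P, Q, R, S be a pqrs-quad and define the B-difference functions G_P(w) = P(w+iπ) − e^{iℓπ}·(λ+μ²)⁻¹·(μ·e^{2w}·R(w) + S(w)), G_Q(w) = Q(w+iπ) + e^{iℓπ}·((μ·e^{2w}·P(w) + Q(w)) + μ·(λ+μ²)⁻¹·e^{2w}·(μ·e^{2w}·R(w) + S(w))), G_R(w) = R(w+iπ) + e^{iℓπ}·R(w), G_S(w) = S(w+iπ) − e^{iℓπ}·((λ+μ²)·P(w) + μ·e^{2w}·R(w)). Then for every w ∈ ℂ: e^w·G_P′(w) = ((ℓ−1)e^w − μ)·G_P(w) + G_Q(w) − e^{2w}·G_R(w); G_Q′(w) = −e^w·((λ + (ℓ+1)μe^w)·G_P(w) + μ·G_Q(w) + G_S(w)); e^w·G_R′(w) = (λ+μ²)·G_P(w) + (2(ℓ−1) + μe^w)·e^w·G_R(w) + G_S(w); e^w·G_S′(w) = (λ+μ²)·G_Q(w) − (λ + (ℓ+1)μe^w)·e^{2w}·G_R(w) + (μ + (ℓ−1)e^w)·G_S(w). -/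

import Mathlib

noncomputable def ipi : ℂ := (Real.pi : ℂ) * Complex.I

noncomputable def GP (ell lam mu : ℂ) (P Q R S : ℂ → ℂ) : ℂ → ℂ := fun w =>
  P (w + ipi) - Complex.exp (Complex.I * ell * (Real.pi : ℂ)) * (lam + mu ^ 2)⁻¹ *
    (mu * Complex.exp (2 * w) * R w + S w)

noncomputable def GQ (ell lam mu : ℂ) (P Q R S : ℂ → ℂ) : ℂ → ℂ := fun w =>
  Q (w + ipi) + Complex.exp (Complex.I * ell * (Real.pi : ℂ)) *
    ((mu * Complex.exp (2 * w) * P w + Q w) +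
      mu * (lam + mu ^ 2)⁻¹ * Complex.exp (2 * w) *
        (mu * Complex.exp (2 * w) * R w + S w))

noncomputable def GR (ell lam mu : ℂ) (P Q R S : ℂ → ℂ) : ℂ → ℂ := fun w =>
  R (w + ipi) + Complex.exp (Complex.I * ell * (Real.pi : ℂ)) * R w

noncomputable def GS (ell lam mu : ℂ) (P Q R S : ℂ → ℂ) : ℂ → ℂ := fun w =>
  S (w + ipi) - Complex.exp (Complex.I * ell * (Real.pi : ℂ)) *
    ((lam + mu ^ 2) * P w + mu * Complex.exp (2 * w) * R w)

set_option maxHeartbeats 2000000 in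
theorem statement_17 (ell lam mu : ℂ) (hne : lam + mu ^ 2 ≠ 0) (P Q R S : ℂ → ℂ)
    (hP : Differentiable ℂ P) (hQ : Differentiable ℂ Q)
    (hR : Differentiable ℂ R) (hS : Differentiable ℂ S)
    (hsys1 : ∀ w : ℂ, Complex.exp w * deriv P w =
      (mu + (ell - 1) * Complex.exp w) * P w - Q w + Complex.exp (2 * w) * R w)
    (hsys2 : ∀ w : ℂ, deriv Q w =
      Complex.exp w * ((lam - (ell + 1) * mu * Complex.exp w) * P w + mu * Q w + S w))
    (hsys3 : ∀ w : ℂ, Complex.exp w * deriv R w =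
      -(lam + mu ^ 2) * P w + Complex.exp w * (2 * (ell - 1) - mu * Complex.exp w) * R w - S w)
    (hsys4 : ∀ w : ℂ, Complex.exp w * deriv S w =
      -(lam + mu ^ 2) * Q w + Complex.exp (2 * w) * (lam - (ell + 1) * mu * Complex.exp w) * R w
        + ((ell - 1) * Complex.exp w - mu) * S w) :
    ∀ w : ℂ,
      Complex.exp w * deriv (GP ell lam mu P Q R S) w =
        ((ell - 1) * Complex.exp w - mu) * GP ell lam mu P Q R S w +
          GQ ell lam mu P Q R S w - Complex.exp (2 * w) * GR ell lam mu P Q R S w ∧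
      deriv (GQ ell lam mu P Q R S) w =
        -(Complex.exp w) * ((lam + (ell + 1) * mu * Complex.exp w) * GP ell lam mu P Q R S w +
          mu * GQ ell lam mu P Q R S w + GS ell lam mu P Q R S w) ∧
      Complex.exp w * deriv (GR ell lam mu P Q R S) w =
        (lam + mu ^ 2) * GP ell lam mu P Q R S w +
          (2 * (ell - 1) + mu * Complex.exp w) * Complex.exp w * GR ell lam mu P Q R S w +
          GS ell lam mu P Q R S w ∧
      Complex.exp w * deriv (GS ell lam mu P Q R S) w =
        (lam + mu ^ 2) * GQ ell lam mu P Q R S w -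
          (lam + (ell + 1) * mu * Complex.exp w) * Complex.exp (2 * w) *
            GR ell lam mu P Q R S w +
          (mu + (ell - 1) * Complex.exp w) * GS ell lam mu P Q R S w := by

  intro w
  have hexp : Complex.exp w ≠ 0 := Complex.exp_ne_zero w
  have hipi : Complex.exp ipi = -1 := by
    simp [ipi, Complex.exp_pi_mul_I]
  have hshifte : Complex.exp (w + ipi) = -Complex.exp w := by
    rw [Complex.exp_add, hipi]; ring
  have h2e : ∀ u : ℂ, Complex.exp (2 * u) = Complex.exp u * Complex.exp u := fun u => by
    rw [two_mul, Complex.exp_add]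
  have h2e' : Complex.exp (2 * (w + ipi)) = Complex.exp w * Complex.exp w := by
    rw [h2e, hshifte]; ring
  -- system equations at w and at w + iπ, with exponentials normalized
  have h1 := hsys1 w; have h2 := hsys2 w; have h3 := hsys3 w; have h4 := hsys4 w
  have h1' := hsys1 (w + ipi); have h2' := hsys2 (w + ipi)
  have h3' := hsys3 (w + ipi); have h4' := hsys4 (w + ipi)
  simp only [h2e] at h1 h2 h3 h4
  simp only [h2e', hshifte] at h1' h2' h3' h4'
  -- division forms of the derivatives
  have hdPw : deriv P w = ((mu + (ell - 1) * Complex.exp w) * P w - Q w +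
      Complex.exp w * Complex.exp w * R w) / Complex.exp w := by
    rw [eq_div_iff hexp]; linear_combination h1
  have hdRw : deriv R w = (-(lam + mu ^ 2) * P w + Complex.exp w *
      (2 * (ell - 1) - mu * Complex.exp w) * R w - S w) / Complex.exp w := by
    rw [eq_div_iff hexp]; linear_combination h3
  have hdSw : deriv S w = (-(lam + mu ^ 2) * Q w + Complex.exp w * Complex.exp w *
      (lam - (ell + 1) * mu * Complex.exp w) * R w
        + ((ell - 1) * Complex.exp w - mu) * S w) / Complex.exp w := by
    rw [eq_div_iff hexp]; linear_combination h4
  have hdPs : deriv P (w + ipi) = -((mu + (ell - 1) * -Complex.exp w) * P (w + ipi)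
      - Q (w + ipi) + Complex.exp w * Complex.exp w * R (w + ipi)) / Complex.exp w := by
    rw [eq_div_iff hexp]; linear_combination -h1'
  have hdRs : deriv R (w + ipi) = -(-(lam + mu ^ 2) * P (w + ipi) + -Complex.exp w *
      (2 * (ell - 1) - mu * -Complex.exp w) * R (w + ipi) - S (w + ipi)) / Complex.exp w := by
    rw [eq_div_iff hexp]; linear_combination -h3'
  have hdSs : deriv S (w + ipi) = -(-(lam + mu ^ 2) * Q (w + ipi) +
      Complex.exp w * Complex.exp w * (lam - (ell + 1) * mu * -Complex.exp w) * R (w + ipi)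
        + ((ell - 1) * -Complex.exp w - mu) * S (w + ipi)) / Complex.exp w := by
    rw [eq_div_iff hexp]; linear_combination -h4'
  -- basic HasDerivAt building blocks
  have hsh : ∀ F : ℂ → ℂ, Differentiable ℂ F →
      HasDerivAt (fun u => F (u + ipi)) (deriv F (w + ipi)) w := by
    intro F hF
    simpa [Function.comp_def] using ((hF (w + ipi)).hasDerivAt).comp w ((hasDerivAt_id w).add_const ipi)
  have hE2 : HasDerivAt (fun u : ℂ => Complex.exp (2 * u)) (2 * Complex.exp (2 * w)) w := by
    have h := (Complex.hasDerivAt_exp (2 * w)).comp w ((hasDerivAt_id w).const_mul 2)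
    simp only [Function.comp_def] at h
    refine h.congr_deriv ?_
    ring
  have hPd := (hP w).hasDerivAt
  have hQd := (hQ w).hasDerivAt
  have hRd := (hR w).hasDerivAt
  have hSd := (hS w).hasDerivAt
  set c : ℂ := Complex.exp (Complex.I * ell * (Real.pi : ℂ)) with hc
  -- derivatives of the B-difference functions
  have hGPd : HasDerivAt (GP ell lam mu P Q R S)
      (deriv P (w + ipi) - c * (lam + mu ^ 2)⁻¹ *
        (mu * (2 * Complex.exp (2 * w)) * R w + mu * Complex.exp (2 * w) * deriv R w
          + deriv S w)) w :=
    (hsh P hP).sub ((((hE2.const_mul mu).mul hRd).add hSd).const_mul (c * (lam + mu ^ 2)⁻¹))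
  have hGQd : HasDerivAt (GQ ell lam mu P Q R S)
      (deriv Q (w + ipi) + c *
        ((mu * (2 * Complex.exp (2 * w)) * P w + mu * Complex.exp (2 * w) * deriv P w
            + deriv Q w) +
          (mu * (lam + mu ^ 2)⁻¹ * (2 * Complex.exp (2 * w)) *
              (mu * Complex.exp (2 * w) * R w + S w) +
            mu * (lam + mu ^ 2)⁻¹ * Complex.exp (2 * w) *
              (mu * (2 * Complex.exp (2 * w)) * R w + mu * Complex.exp (2 * w) * deriv R w
                + deriv S w)))) w :=
    (hsh Q hQ).add (((((hE2.const_mul mu).mul hPd).add hQd).add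
      ((hE2.const_mul (mu * (lam + mu ^ 2)⁻¹)).mul
        (((hE2.const_mul mu).mul hRd).add hSd))).const_mul c)
  have hGRd : HasDerivAt (GR ell lam mu P Q R S)
      (deriv R (w + ipi) + c * deriv R w) w :=
    (hsh R hR).add (hRd.const_mul c)
  have hGSd : HasDerivAt (GS ell lam mu P Q R S)
      (deriv S (w + ipi) - c *
        ((lam + mu ^ 2) * deriv P w +
          (mu * (2 * Complex.exp (2 * w)) * R w + mu * Complex.exp (2 * w) * deriv R w))) w :=
    (hsh S hS).sub (((hPd.const_mul (lam + mu ^ 2)).add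
      ((hE2.const_mul mu).mul hRd)).const_mul c)
  refine ⟨?_, ?_, ?_, ?_⟩
  · rw [hGPd.deriv]
    simp only [GP, GQ, GR, GS, h2e, hdPw, hdRw, hdSw, hdPs, hdRs, hdSs, h2, hc]
    field_simp
    ring
  · rw [hGQd.deriv]
    simp only [GP, GQ, GR, GS, h2e, hdPw, hdRw, hdSw, hdPs, hdRs, hdSs, h2, h2', hc]
    field_simp
    ring
  · rw [hGRd.deriv]
    simp only [GP, GQ, GR, GS, h2e, hdPw, hdRw, hdSw, hdPs, hdRs, hdSs, h2, hc]
    field_simp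
    ring
  · rw [hGSd.deriv]
    simp only [GP, GQ, GR, GS, h2e, hdPw, hdRw, hdSw, hdPs, hdRs, hdSs, h2, hc]
    field_simp
    ring
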